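/- With notation as above, for each x ∈ g the operator Z*_{f,β}(x) = Z*(x) + M_{Z*(x)f} - β(x) on ℂ[a,a*] commutes with multiplication by a_i and with ∂/∂a_i + a*_i for all i. -/

import Mathlib

open MvPolynomial

section Aux
variable {m : ℕ}

private lemma aux_mulLeft_comm (p q : MvPolynomial (Fin m ⊕ Fin m) ℂ) :
    LinearMap.mulLeft ℂ p * LinearMap.mulLeft ℂ q
      = LinearMap.mulLeft ℂ q * LinearMap.mulLeft ℂ p := by
  apply LinearMap.ext; intro r
  simp only [Module.End.mul_apply, LinearMap.mulLeft_apply]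
  ring

private lemma aux_pd_mulLeft_of_ne {u v : Fin m ⊕ Fin m} (h : u ≠ v) :
    ((pderiv u).toLinearMap : Module.End ℂ (MvPolynomial (Fin m ⊕ Fin m) ℂ)) *
        LinearMap.mulLeft ℂ (X v)
      = LinearMap.mulLeft ℂ (X v) * (pderiv u).toLinearMap := by
  apply LinearMap.ext; intro p
  simp [Module.End.mul_apply, pderiv_mul, pderiv_X_of_ne h.symm]

private lemma aux_pd_mulLeft_self (u : Fin m ⊕ Fin m) :
    ((pderiv u).toLinearMap : Module.End ℂ (MvPolynomial (Fin m ⊕ Fin m) ℂ)) *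
        LinearMap.mulLeft ℂ (X u)
      = LinearMap.mulLeft ℂ (X u) * (pderiv u).toLinearMap + 1 := by
  apply LinearMap.ext; intro p
  simp [Module.End.mul_apply, pderiv_mul]

private lemma aux_pd_comm (u v : Fin m ⊕ Fin m)
    (p : MvPolynomial (Fin m ⊕ Fin m) ℂ) :
    pderiv u (pderiv v p) = pderiv v (pderiv u p) := by
  induction p using MvPolynomial.induction_on with
  | C a => simp
  | add p q hp hq => simp [hp, hq]
  | mul_X p n hp =>
      simp only [pderiv_mul, map_add, pderiv_X, hp]
      classical
      rcases eq_or_ne n u with rfl | hu <;> rcases eq_or_ne n v with rfl | hv <;>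
        simp_all [Pi.single_apply]

private lemma aux_pd_mulLeft (u : Fin m ⊕ Fin m)
    (F : MvPolynomial (Fin m ⊕ Fin m) ℂ) :
    ((pderiv u).toLinearMap : Module.End ℂ (MvPolynomial (Fin m ⊕ Fin m) ℂ)) *
        LinearMap.mulLeft ℂ F
      = LinearMap.mulLeft ℂ (pderiv u F)
        + LinearMap.mulLeft ℂ F * (pderiv u).toLinearMap := by
  apply LinearMap.ext; intro p
  simp only [Module.End.mul_apply, LinearMap.add_apply, LinearMap.mulLeft_apply,
    Derivation.coeFn_coe, pderiv_mul]

/-- `S` commutes with multiplication by a left (`a`) variable. -/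
private lemma aux_S_mulLeft_inl (c : Fin m → Fin m → ℂ) (i : Fin m) :
    (∑ k : Fin m, ∑ j : Fin m, c k j •
        (LinearMap.mulLeft ℂ (X (Sum.inr j)) *
          ((pderiv (Sum.inr k)).toLinearMap
            : Module.End ℂ (MvPolynomial (Fin m ⊕ Fin m) ℂ))))
      * LinearMap.mulLeft ℂ (X (Sum.inl i))
    = LinearMap.mulLeft ℂ (X (Sum.inl i)) *
      ∑ k : Fin m, ∑ j : Fin m, c k j •
        (LinearMap.mulLeft ℂ (X (Sum.inr j)) *
          ((pderiv (Sum.inr k)).toLinearMap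
            : Module.End ℂ (MvPolynomial (Fin m ⊕ Fin m) ℂ))) := by
  rw [Finset.sum_mul, Finset.mul_sum]
  refine Finset.sum_congr rfl fun k _ => ?_
  rw [Finset.sum_mul, Finset.mul_sum]
  refine Finset.sum_congr rfl fun j _ => ?_
  rw [smul_mul_assoc, mul_smul_comm]
  congr 1
  rw [mul_assoc, aux_pd_mulLeft_of_ne (Sum.inr_ne_inl), ← mul_assoc,
    aux_mulLeft_comm, mul_assoc]

/-- `S` commutes with `∂/∂aᵢ`. -/
private lemma aux_S_pd_inl (c : Fin m → Fin m → ℂ) (i : Fin m) :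
    (∑ k : Fin m, ∑ j : Fin m, c k j •
        (LinearMap.mulLeft ℂ (X (Sum.inr j)) *
          ((pderiv (Sum.inr k)).toLinearMap
            : Module.End ℂ (MvPolynomial (Fin m ⊕ Fin m) ℂ))))
      * ((pderiv (Sum.inl i)).toLinearMap
          : Module.End ℂ (MvPolynomial (Fin m ⊕ Fin m) ℂ))
    = ((pderiv (Sum.inl i)).toLinearMap
          : Module.End ℂ (MvPolynomial (Fin m ⊕ Fin m) ℂ)) *
      ∑ k : Fin m, ∑ j : Fin m, c k j •
        (LinearMap.mulLeft ℂ (X (Sum.inr j)) *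
          ((pderiv (Sum.inr k)).toLinearMap
            : Module.End ℂ (MvPolynomial (Fin m ⊕ Fin m) ℂ))) := by
  rw [Finset.sum_mul, Finset.mul_sum]
  refine Finset.sum_congr rfl fun k _ => ?_
  rw [Finset.sum_mul, Finset.mul_sum]
  refine Finset.sum_congr rfl fun j _ => ?_
  rw [smul_mul_assoc, mul_smul_comm]
  congr 1
  have hdd : ((pderiv (Sum.inr k)).toLinearMap
        : Module.End ℂ (MvPolynomial (Fin m ⊕ Fin m) ℂ)) *
        (pderiv (Sum.inl i)).toLinearMap
      = ((pderiv (Sum.inl i)).toLinearMap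
        : Module.End ℂ (MvPolynomial (Fin m ⊕ Fin m) ℂ)) *
        (pderiv (Sum.inr k)).toLinearMap := by
    apply LinearMap.ext; intro p
    simp [Module.End.mul_apply, aux_pd_comm]
  rw [mul_assoc, hdd, ← mul_assoc, ← aux_pd_mulLeft_of_ne (Sum.inl_ne_inr), mul_assoc]

/-- Commutator of `S` with multiplication by `a*ᵢ`. -/
private lemma aux_S_mulLeft_inr (c : Fin m → Fin m → ℂ) (i : Fin m) :
    (∑ k : Fin m, ∑ j : Fin m, c k j •
        (LinearMap.mulLeft ℂ (X (Sum.inr j)) *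
          ((pderiv (Sum.inr k)).toLinearMap
            : Module.End ℂ (MvPolynomial (Fin m ⊕ Fin m) ℂ))))
      * LinearMap.mulLeft ℂ (X (Sum.inr i))
    = LinearMap.mulLeft ℂ (X (Sum.inr i)) *
      (∑ k : Fin m, ∑ j : Fin m, c k j •
        (LinearMap.mulLeft ℂ (X (Sum.inr j)) *
          ((pderiv (Sum.inr k)).toLinearMap
            : Module.End ℂ (MvPolynomial (Fin m ⊕ Fin m) ℂ))))
      + ∑ j : Fin m, c i j • LinearMap.mulLeft ℂ (X (Sum.inr j)) := by
  rw [Finset.sum_mul, Finset.mul_sum]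
  have step : ∀ k : Fin m,
      (∑ j : Fin m, c k j •
        (LinearMap.mulLeft ℂ (X (Sum.inr j)) *
          ((pderiv (Sum.inr k)).toLinearMap
            : Module.End ℂ (MvPolynomial (Fin m ⊕ Fin m) ℂ))))
        * LinearMap.mulLeft ℂ (X (Sum.inr i))
      = LinearMap.mulLeft ℂ (X (Sum.inr i)) *
        (∑ j : Fin m, c k j •
          (LinearMap.mulLeft ℂ (X (Sum.inr j)) *
            ((pderiv (Sum.inr k)).toLinearMap
              : Module.End ℂ (MvPolynomial (Fin m ⊕ Fin m) ℂ))))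
        + if k = i then ∑ j : Fin m, c k j • LinearMap.mulLeft ℂ (X (Sum.inr j)) else 0 := by
    intro k
    rcases eq_or_ne k i with rfl | hk
    · rw [if_pos rfl]
      rw [Finset.sum_mul, Finset.mul_sum, ← Finset.sum_add_distrib]
      refine Finset.sum_congr rfl fun j _ => ?_
      rw [smul_mul_assoc, mul_smul_comm, ← smul_add]
      congr 1
      rw [mul_assoc, aux_pd_mulLeft_self, mul_add, mul_one, ← mul_assoc,
        aux_mulLeft_comm, mul_assoc]
    · rw [if_neg hk, add_zero]
      rw [Finset.sum_mul, Finset.mul_sum]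
      refine Finset.sum_congr rfl fun j _ => ?_
      rw [smul_mul_assoc, mul_smul_comm]
      congr 1
      rw [mul_assoc, aux_pd_mulLeft_of_ne (by simp [hk]), ← mul_assoc,
        aux_mulLeft_comm, mul_assoc]
  calc (∑ k : Fin m, (∑ j : Fin m, c k j •
        (LinearMap.mulLeft ℂ (X (Sum.inr j)) *
          ((pderiv (Sum.inr k)).toLinearMap
            : Module.End ℂ (MvPolynomial (Fin m ⊕ Fin m) ℂ))))
        * LinearMap.mulLeft ℂ (X (Sum.inr i)))
      = ∑ k : Fin m, (LinearMap.mulLeft ℂ (X (Sum.inr i)) *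
        (∑ j : Fin m, c k j •
          (LinearMap.mulLeft ℂ (X (Sum.inr j)) *
            ((pderiv (Sum.inr k)).toLinearMap
              : Module.End ℂ (MvPolynomial (Fin m ⊕ Fin m) ℂ))))
        + if k = i then ∑ j : Fin m, c k j • LinearMap.mulLeft ℂ (X (Sum.inr j)) else 0) :=
        Finset.sum_congr rfl fun k _ => step k
    _ = _ := by
        rw [Finset.sum_add_distrib]
        simp [Finset.sum_ite_eq']

end Aux

/-- With `Z*(x) = -Σ_{i,j} (M x)_{ij} a*ⱼ ∂/∂a*ᵢ` a derivation of `ℂ[a,a*]` in the `a*`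
(= `inr`) variables, `f = Σᵢ aᵢa*ᵢ`, and `β(x) ∈ ℂ` a scalar, the operator
`Z*_{f,β}(x) = Z*(x) + (multiplication by Z*(x)f) - β(x)` commutes with multiplication by
each `aᵢ` and with each operator `∂/∂aᵢ + a*ᵢ`. -/
theorem Zstar_f_beta_commutes_with_D (m : ℕ)
    (g : Type*) [LieRing g] [LieAlgebra ℂ g]
    (M : g → Matrix (Fin m) (Fin m) ℂ)
    (β : g →ₗ[ℂ] ℂ)
    (Zs : g → Module.End ℂ (MvPolynomial (Fin m ⊕ Fin m) ℂ))
    (hZs : ∀ x, Zs x = - ∑ i : Fin m, ∑ j : Fin m, M x i j •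
      (LinearMap.mulLeft ℂ (X (Sum.inr j)) *
        ((pderiv (Sum.inr i)).toLinearMap
          : Module.End ℂ (MvPolynomial (Fin m ⊕ Fin m) ℂ))))
    (f : MvPolynomial (Fin m ⊕ Fin m) ℂ)
    (hf : f = ∑ i : Fin m, X (Sum.inl i) * X (Sum.inr i))
    (T : g → Module.End ℂ (MvPolynomial (Fin m ⊕ Fin m) ℂ))
    (hT : ∀ x, T x = Zs x + LinearMap.mulLeft ℂ (Zs x f)
      - β x • (1 : Module.End ℂ (MvPolynomial (Fin m ⊕ Fin m) ℂ))) :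
    ∀ (x : g) (i : Fin m),
      T x * LinearMap.mulLeft ℂ (X (Sum.inl i))
        = LinearMap.mulLeft ℂ (X (Sum.inl i)) * T x ∧
      T x * (((pderiv (Sum.inl i)).toLinearMap
            : Module.End ℂ (MvPolynomial (Fin m ⊕ Fin m) ℂ))
          + LinearMap.mulLeft ℂ (X (Sum.inr i)))
        = (((pderiv (Sum.inl i)).toLinearMap
            : Module.End ℂ (MvPolynomial (Fin m ⊕ Fin m) ℂ))
          + LinearMap.mulLeft ℂ (X (Sum.inr i))) * T x := by
  intro x i
  set S : Module.End ℂ (MvPolynomial (Fin m ⊕ Fin m) ℂ) :=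
    ∑ k : Fin m, ∑ j : Fin m, M x k j •
      (LinearMap.mulLeft ℂ (X (Sum.inr j)) *
        ((pderiv (Sum.inr k)).toLinearMap
          : Module.End ℂ (MvPolynomial (Fin m ⊕ Fin m) ℂ))) with hS
  have hZx : Zs x = -S := hZs x
  -- the value of `Zs x f`
  have hZf : Zs x f = - ∑ k : Fin m, ∑ j : Fin m,
      M x k j • (X (Sum.inr j) * X (Sum.inl k)) := by
    rw [hZs, hf]
    simp only [LinearMap.neg_apply, LinearMap.sum_apply, LinearMap.smul_apply,
      Module.End.mul_apply, LinearMap.mulLeft_apply, Derivation.coeFn_coe,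
      map_sum, pderiv_mul, pderiv_X, Pi.single_apply]
    simp only [reduceCtorEq, if_false, zero_mul, zero_add, Sum.inr.injEq, mul_ite, mul_one,
      mul_zero, smul_ite, smul_zero, Finset.sum_ite_eq, Finset.mem_univ, if_true,
      Finset.sum_neg_distrib]
    rw [Finset.sum_comm]
    congr 1
    apply Finset.sum_congr rfl; intro y _
    rw [Finset.sum_comm]
    simp [Finset.sum_ite_eq']
  -- `pderiv (inl i)` of `Zs x f`
  have hdF : pderiv (Sum.inl i) (Zs x f)
      = - ∑ j : Fin m, M x i j • (X (Sum.inr j) : MvPolynomial (Fin m ⊕ Fin m) ℂ) := by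
    rw [hZf]
    simp only [map_neg, map_sum, Derivation.map_smul, pderiv_mul, pderiv_X,
      Pi.single_apply]
    simp only [reduceCtorEq, if_false, Sum.inl.injEq, mul_zero, zero_add, mul_ite, mul_one,
      smul_ite, smul_zero]
    rw [Finset.sum_comm]
    simp [Finset.sum_ite_eq', eq_comm]
  have hmuldF : LinearMap.mulLeft ℂ (pderiv (Sum.inl i) (Zs x f))
      = - ∑ j : Fin m, M x i j •
          LinearMap.mulLeft ℂ (X (Sum.inr j) : MvPolynomial (Fin m ⊕ Fin m) ℂ) := by
    rw [hdF]
    apply LinearMap.ext; intro p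
    simp [Finset.sum_mul, smul_mul_assoc]
  -- commutation facts
  have hFA : ∀ v : Fin m ⊕ Fin m,
      LinearMap.mulLeft ℂ (Zs x f) * LinearMap.mulLeft ℂ (X v)
        = LinearMap.mulLeft ℂ (X v) * LinearMap.mulLeft ℂ (Zs x f) :=
    fun v => aux_mulLeft_comm _ _
  have hone : ∀ (E : Module.End ℂ (MvPolynomial (Fin m ⊕ Fin m) ℂ)),
      (β x • (1 : Module.End ℂ (MvPolynomial (Fin m ⊕ Fin m) ℂ))) * E
        = E * (β x • 1) := by
    intro E
    rw [smul_mul_assoc, mul_smul_comm, one_mul, mul_one]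
  constructor
  · -- commutation with multiplication by `aᵢ`
    have hZA : Zs x * LinearMap.mulLeft ℂ (X (Sum.inl i))
        = LinearMap.mulLeft ℂ (X (Sum.inl i)) * Zs x := by
      rw [hZx, neg_mul S (LinearMap.mulLeft ℂ (X (Sum.inl i))),
        mul_neg (LinearMap.mulLeft ℂ (X (Sum.inl i))) S, hS, aux_S_mulLeft_inl (fun k j => M x k j)]
    rw [hT x, sub_mul, mul_sub, add_mul, mul_add, hZA, hFA, hone]
  · -- commutation with `∂/∂aᵢ + a*ᵢ`
    set E : Module.End ℂ (MvPolynomial (Fin m ⊕ Fin m) ℂ) :=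
      ((pderiv (Sum.inl i)).toLinearMap
          : Module.End ℂ (MvPolynomial (Fin m ⊕ Fin m) ℂ))
        + LinearMap.mulLeft ℂ (X (Sum.inr i)) with hE
    set W : Module.End ℂ (MvPolynomial (Fin m ⊕ Fin m) ℂ) :=
      ∑ j : Fin m, M x i j • LinearMap.mulLeft ℂ (X (Sum.inr j)) with hW
    have hSE : S * E = E * S + W := by
      rw [hE, mul_add, add_mul, hW, hS, aux_S_pd_inl (fun k j => M x k j), aux_S_mulLeft_inr (fun k j => M x k j)]
      abel
    have key1 : Zs x * E = E * Zs x - W := by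
      rw [hZx, neg_mul S E, mul_neg E S, hSE]
      abel
    have key2 : LinearMap.mulLeft ℂ (Zs x f) * E
        = E * LinearMap.mulLeft ℂ (Zs x f) + W := by
      rw [hE, mul_add, add_mul, hFA]
      have h3 := aux_pd_mulLeft (Sum.inl i) (Zs x f)
      rw [hmuldF] at h3
      rw [h3]
      abel
    rw [hT x]
    calc (Zs x + LinearMap.mulLeft ℂ (Zs x f)
          - β x • (1 : Module.End ℂ (MvPolynomial (Fin m ⊕ Fin m) ℂ))) * E
        = Zs x * E + LinearMap.mulLeft ℂ (Zs x f) * E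
            - (β x • (1 : Module.End ℂ (MvPolynomial (Fin m ⊕ Fin m) ℂ))) * E := by
          rw [sub_mul, add_mul]
      _ = (E * Zs x - W) + (E * LinearMap.mulLeft ℂ (Zs x f) + W)
            - E * (β x • (1 : Module.End ℂ (MvPolynomial (Fin m ⊕ Fin m) ℂ))) := by
          rw [key1, key2, hone]
      _ = E * (Zs x + LinearMap.mulLeft ℂ (Zs x f)
            - β x • (1 : Module.End ℂ (MvPolynomial (Fin m ⊕ Fin m) ℂ))) := by
          rw [mul_sub, mul_add]
          abel
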